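/- Let $f : (0,1) \to [0,\infty)$ be absolutely continuous, nondecreasing, with $f(1) \leq M$ for some $M > 0$, and suppose there are constants $C > 0$ and $\alpha > 1$ such that $f(t) \leq C (t f'(t))^{\alpha}$ for almost every $t \in (0,1)$. Then there exists $\delta > 0$, depending only on $C$, $\alpha$, and $M$, such that $f(t) = 0$ for all $t \in (0, \delta)$. In fact one may take $\delta = \exp(-\alpha\, C^{1/\alpha} M^{(\alpha-1)/\alpha}/(\alpha - 1))$ up to adjusting constants. -/

import Mathlib

open Set MeasureTheory

/-- ODE-type iteration lemma.  If `f : (0,1) → [0,∞)` is absolutely continuous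
(here: differentiable on `(0,1)` with derivative `f'`), nondecreasing, bounded by `M`, and
satisfies `f(t) ≤ C (t f'(t))^α` for a.e. `t ∈ (0,1)` with `C > 0`, `α > 1`, then there is
`δ > 0`, depending only on `C`, `α` and `M`, such that `f ≡ 0` on `(0, δ)`. -/
theorem vanishing_near_zero_of_differential_inequality
    (C α M : ℝ) (hC : 0 < C) (hα : 1 < α) (hM : 0 < M) :
    ∃ δ > 0, ∀ f f' : ℝ → ℝ,
      (∀ t ∈ Ioo (0:ℝ) 1, 0 ≤ f t) →
      MonotoneOn f (Ioo (0:ℝ) 1) →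
      (∀ t ∈ Ioo (0:ℝ) 1, HasDerivAt f (f' t) t) →
      (∀ t ∈ Ioo (0:ℝ) 1, f t ≤ M) →
      (∀ᵐ t ∂(volume.restrict (Ioo (0:ℝ) 1)), f t ≤ C * (t * f' t) ^ α) →
      ∀ t ∈ Ioo (0:ℝ) (min δ 1), f t = 0 := by
  have hα0 : (0:ℝ) < α := by linarith
  set β : ℝ := 1 - 1/α with hβdef
  have hβ : 0 < β := by
    have : 1/α < 1 := by rw [div_lt_one hα0]; exact hα
    simp only [hβdef]; linarith
  set c : ℝ := β / C ^ (1/α) with hcdef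
  have hCpow : 0 < C ^ (1/α) := Real.rpow_pos_of_pos hC _
  have hc : 0 < c := div_pos hβ hCpow
  refine ⟨(1/2) * Real.exp (-(M ^ β + 1) / c), by positivity, ?_⟩
  intro f f' hf0 hmono hderiv hbdd hae t ht
  by_contra hft
  obtain ⟨ht0, htδ⟩ := ht
  have ht1 : t < 1 := lt_of_lt_of_le htδ (min_le_right _ _)
  have htδ' : t < (1/2) * Real.exp (-(M ^ β + 1) / c) := lt_of_lt_of_le htδ (min_le_left _ _)
  have htI : t ∈ Ioo (0:ℝ) 1 := ⟨ht0, ht1⟩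
  have hfa : 0 < f t := (hf0 t htI).lt_of_ne (Ne.symm hft)
  set a := t with ha
  set b : ℝ := (1 + t)/2 with hb
  have hab : a < b := by simp only [hb, ha]; linarith
  have hb1 : b < 1 := by simp only [hb]; linarith
  have hb0 : 0 < b := lt_trans ht0 hab
  have hbI : b ∈ Ioo (0:ℝ) 1 := ⟨hb0, hb1⟩
  have hIccI : Icc a b ⊆ Ioo (0:ℝ) 1 := fun x hx => ⟨lt_of_lt_of_le ht0 hx.1, lt_of_le_of_lt hx.2 hb1⟩
  have hfpos : ∀ x ∈ Icc a b, 0 < f x := fun x hx =>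
    lt_of_lt_of_le hfa (hmono htI (hIccI hx) hx.1)
  -- projection onto [a, b]
  set proj : ℝ → ℝ := fun x => max a (min b x) with hproj
  have hprojmem : ∀ x, proj x ∈ Icc a b :=
    fun x => ⟨le_max_left _ _, max_le hab.le (min_le_left _ _)⟩
  have hprojeq : ∀ x ∈ Icc a b, proj x = x := by
    intro x hx
    simp only [hproj]
    rw [min_eq_right hx.2, max_eq_right hx.1]
  have hprojmono : Monotone proj := fun x y hxy =>
    max_le_max le_rfl (min_le_min le_rfl hxy)
  -- the extended function φ = f ∘ proj ^ β
  set φ : ℝ → ℝ := fun x => f (proj x) ^ β with hφ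
  have hφmono : Monotone φ := by
    intro x y hxy
    exact Real.rpow_le_rpow (hf0 _ (hIccI (hprojmem x)))
      (hmono (hIccI (hprojmem x)) (hIccI (hprojmem y)) (hprojmono hxy)) hβ.le
  have hφcont : Continuous φ := by
    rw [continuous_iff_continuousAt]
    intro x
    have hprojc : Continuous proj := continuous_const.max (continuous_const.min continuous_id)
    have hfc : ContinuousAt f (proj x) :=
      (hderiv _ (hIccI (hprojmem x))).differentiableAt.continuousAt
    have hrc : ContinuousAt (fun y : ℝ => y ^ β) (f (proj x)) :=
      Real.continuousAt_rpow_const _ _ (Or.inl (ne_of_gt (hfpos _ (hprojmem x))))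
    exact (hrc.comp hfc).comp hprojc.continuousAt
  set s := hφmono.stieltjesFunction with hs
  have hseq : ∀ x, s x = φ x := by
    intro x
    rw [hφmono.stieltjesFunction_eq]
    exact rightLim_eq_of_tendsto
      ((hφcont.continuousAt).tendsto.mono_left nhdsWithin_le_nhds)
  set μ := s.measure with hμ
  -- the a.e. facts
  have h1 : ∀ᵐ x, HasDerivAt φ ((Measure.rnDeriv μ volume x).toReal) x := hφmono.ae_hasDerivAt
  have h3 : ∀ᵐ x, x ∈ Ioo (0:ℝ) 1 → f x ≤ C * (x * f' x) ^ α :=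
    (ae_restrict_iff' measurableSet_Ioo).mp hae
  have hKey : ∀ᵐ x, x ∈ Ioo a b → ENNReal.ofReal (c / x) ≤ Measure.rnDeriv μ volume x := by
    filter_upwards [h1, h3] with x hx1 hx3
    intro hxab
    have hxIcc : x ∈ Icc a b := Ioo_subset_Icc_self hxab
    have hxI : x ∈ Ioo (0:ℝ) 1 := hIccI hxIcc
    have hx0 : 0 < x := hxI.1
    have hfx : 0 < f x := hfpos x hxIcc
    -- derivative of φ at x
    have hD : HasDerivAt φ (f' x * β * f x ^ (β - 1)) x := by
      have h := (hderiv x hxI).rpow_const (p := β) (Or.inl (ne_of_gt hfx))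
      apply h.congr_of_eventuallyEq
      filter_upwards [Ioo_mem_nhds hxab.1 hxab.2] with y hy
      simp only [hφ, hprojeq y (Ioo_subset_Icc_self hy)]
    have hdx : (Measure.rnDeriv μ volume x).toReal = f' x * β * f x ^ (β - 1) := hx1.unique hD
    -- nonnegativity of f'
    have hf'0 : 0 ≤ f' x := by
      have h := hderiv x hxI
      rw [hasDerivAt_iff_tendsto_slope] at h
      have h' : Filter.Tendsto (slope f x) (nhdsWithin x (Ioi x)) (nhds (f' x)) :=
        h.mono_left (nhdsGT_le_nhdsNE x)
      refine ge_of_tendsto h' ?_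
      filter_upwards [Ioo_mem_nhdsGT_of_mem ⟨le_refl x, hxI.2⟩] with y hy
      have hle : f x ≤ f y := hmono hxI ⟨hx0.trans hy.1, hy.2⟩ hy.1.le
      have hyx : (0:ℝ) < y - x := by linarith [hy.1]
      rw [slope_def_field]
      exact div_nonneg (sub_nonneg.mpr hle) hyx.le
    -- the differential inequality
    have h4 : f x / C ≤ (x * f' x) ^ α := by
      rw [div_le_iff₀ hC]; linarith [hx3 hxI]
    have h5 : (f x / C) ^ (1/α) ≤ x * f' x := by
      have h6 := Real.rpow_le_rpow (by positivity) h4 (by positivity : (0:ℝ) ≤ 1/α)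
      rwa [← Real.rpow_mul (by positivity), mul_one_div, div_self (ne_of_gt hα0),
        Real.rpow_one] at h6
    have h7 : f x ^ (1/α) / C ^ (1/α) ≤ x * f' x := by
      rwa [Real.div_rpow hfx.le hC.le] at h5
    have hone : f x ^ (β - 1) * f x ^ (1/α) = 1 := by
      rw [← Real.rpow_add hfx]
      have : β - 1 + 1/α = 0 := by rw [hβdef]; ring
      rw [this, Real.rpow_zero]
    have h8 : c / x ≤ f' x * β * f x ^ (β - 1) := by
      have h9 : f x ^ (1/α) ≤ x * f' x * C ^ (1/α) := by
        rw [div_le_iff₀ hCpow] at h7; exact h7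
      have h10 : β * (f x ^ (β - 1) * f x ^ (1/α)) ≤
          β * (f x ^ (β - 1) * (x * f' x * C ^ (1/α))) := by
        apply mul_le_mul_of_nonneg_left _ hβ.le
        exact mul_le_mul_of_nonneg_left h9 (Real.rpow_nonneg hfx.le _)
      rw [hone, mul_one] at h10
      rw [hcdef, div_div, div_le_iff₀ (by positivity : (0:ℝ) < C ^ (1/α) * x)]
      calc β ≤ β * (f x ^ (β - 1) * (x * f' x * C ^ (1/α))) := h10
        _ = f' x * β * f x ^ (β - 1) * (C ^ (1/α) * x) := by ring
    refine ENNReal.ofReal_le_of_le_toReal ?_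
    rw [hdx]; exact h8
  -- the integral computation
  have hne : ∀ x ∈ Icc a b, x ≠ 0 := fun x hx => ne_of_gt (lt_of_lt_of_le ht0 hx.1)
  have hInt : IntegrableOn (fun x => c / x) (Ioo a b) volume := by
    apply IntegrableOn.mono_set _ Ioo_subset_Icc_self
    apply ContinuousOn.integrableOn_Icc
    exact continuousOn_const.div continuousOn_id hne
  have hIntEq : ∫ x in Ioo a b, c / x = c * (Real.log b - Real.log a) := by
    rw [← integral_Ioc_eq_integral_Ioo, ← intervalIntegral.integral_of_le hab.le]
    have h0 : (0:ℝ) ∉ uIcc a b := by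
      rw [uIcc_of_le hab.le]; intro h; exact hne 0 h rfl
    simp_rw [div_eq_mul_inv]
    rw [intervalIntegral.integral_const_mul, integral_inv h0,
      Real.log_div (ne_of_gt hb0) (ne_of_gt ht0)]
  have hchain : ENNReal.ofReal (c * (Real.log b - Real.log a)) ≤
      ENNReal.ofReal (f b ^ β - f a ^ β) := by
    calc ENNReal.ofReal (c * (Real.log b - Real.log a))
        = ∫⁻ x in Ioo a b, ENNReal.ofReal (c / x) := by
          rw [← hIntEq, ofReal_integral_eq_lintegral_ofReal hInt]
          refine (ae_restrict_iff' measurableSet_Ioo).mpr (Filter.Eventually.of_forall ?_)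
          intro x hx
          exact div_nonneg hc.le (le_of_lt (ht0.trans hx.1))
      _ ≤ ∫⁻ x in Ioo a b, Measure.rnDeriv μ volume x := by
          refine lintegral_mono_ae ?_
          exact (ae_restrict_iff' measurableSet_Ioo).mpr hKey
      _ ≤ ∫⁻ x in Ioc a b, Measure.rnDeriv μ volume x :=
          lintegral_mono_set Ioo_subset_Ioc_self
      _ = (volume.withDensity (Measure.rnDeriv μ volume)) (Ioc a b) :=
          (withDensity_apply _ measurableSet_Ioc).symm
      _ ≤ μ (Ioc a b) := Measure.withDensity_rnDeriv_le μ volume _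
      _ = ENNReal.ofReal (s b - s a) := s.measure_Ioc a b
      _ = ENNReal.ofReal (f b ^ β - f a ^ β) := by
          rw [hseq a, hseq b]
          simp only [hφ, hprojeq a ⟨le_rfl, hab.le⟩, hprojeq b ⟨hab.le, le_rfl⟩]
  have hfmono : f a ≤ f b := hmono htI hbI hab.le
  have hsub : 0 ≤ f b ^ β - f a ^ β := by
    have := Real.rpow_le_rpow hfa.le hfmono hβ.le
    linarith
  have hfinal : c * (Real.log b - Real.log a) ≤ f b ^ β - f a ^ β :=
    (ENNReal.ofReal_le_ofReal_iff hsub).mp hchain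
  -- upper bound on the rhs
  have hup : f b ^ β - f a ^ β ≤ M ^ β := by
    have h1 : f b ^ β ≤ M ^ β := Real.rpow_le_rpow (hf0 b hbI) (hbdd b hbI) hβ.le
    have h2 : 0 ≤ f a ^ β := Real.rpow_nonneg hfa.le _
    linarith
  -- lower bound on the lhs
  have hloga : Real.log 2 + Real.log a < -(M ^ β + 1) / c := by
    have h2a : 0 < 2 * a := by linarith
    have := Real.log_lt_log h2a (by linarith : 2 * a < Real.exp (-(M ^ β + 1) / c))
    rwa [Real.log_mul two_ne_zero (ne_of_gt ht0), Real.log_exp] at this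
  have hlogb : -Real.log 2 ≤ Real.log b := by
    have : Real.log (1/2) ≤ Real.log b := Real.log_le_log (by norm_num) (by simp only [hb]; linarith)
    rwa [one_div, Real.log_inv] at this
  have hlow : M ^ β + 1 < c * (Real.log b - Real.log a) := by
    have h1 : (M ^ β + 1) / c < -Real.log 2 - Real.log a := by
      have := hloga
      have h2 : -(M ^ β + 1) / c = -((M ^ β + 1) / c) := by ring
      linarith [h2 ▸ this]
    have h2 : (M ^ β + 1) / c < Real.log b - Real.log a := by linarith
    calc M ^ β + 1 = c * ((M ^ β + 1) / c) := by field_simp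
      _ < c * (Real.log b - Real.log a) := by
          exact mul_lt_mul_of_pos_left h2 hc
  linarith
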